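/- Let k ≥ 2 be an integer, r̄ a residue with 1 ≤ r̄ ≤ k, and A = {a ∈ ℕ : a ≥ 1 and a ≡ r̄ (mod k)}. If for every integer n ≥ 1 the reduction of D_A modulo kⁿ is all of ℤ/kⁿℤ, then A has no local obstructions: for every integer q ≥ 2 the reduction of D_A modulo q is all of ℤ/qℤ. -/

import Mathlib

/-- The generator matrix `[[0,1],[1,a]]`. -/
def cfGen (a : ℕ) : Matrix (Fin 2) (Fin 2) ℤ := !![0, 1; 1, (a : ℤ)]

/-- The semigroup `G_A`: all nonempty finite products of the generators
`[[0,1],[1,a]]` with `a ∈ A`. -/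
def GSemigroup (A : Set ℕ) : Set (Matrix (Fin 2) (Fin 2) ℤ) :=
  { M | ∃ l : List ℕ, l ≠ [] ∧ (∀ a ∈ l, a ∈ A) ∧ M = (l.map cfGen).prod }

/-- The set `D_A` of bottom-right entries of matrices in `G_A`. -/
def Denoms (A : Set ℕ) : Set ℕ :=
  { d | ∃ M ∈ GSemigroup A, M 1 1 = (d : ℤ) }

section Aux

lemma cop_aux (k q : ℕ) (hq : 2 ≤ q) :
    Nat.Coprime (q / Nat.gcd q (k ^ q)) k := by
  by_contra hc
  obtain ⟨p, hp, hp1, hp2⟩ := Nat.Prime.not_coprime_iff_dvd.mp hc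
  have hq0 : q ≠ 0 := by omega
  set g := Nat.gcd q (k ^ q) with hg
  have hgdvd : g ∣ q := Nat.gcd_dvd_left _ _
  set v := q.factorization p with hv
  have hpvq : p ^ v ∣ q := Nat.ordProj_dvd q p
  have hvlt : v < q := Nat.factorization_lt p hq0
  have hpvk : p ^ v ∣ k ^ q := dvd_trans (pow_dvd_pow p hvlt.le) (pow_dvd_pow_of_dvd hp2 q)
  have hpvg : p ^ v ∣ g := Nat.dvd_gcd hpvq hpvk
  have : p ^ (v + 1) ∣ q := by
    have h1 : q = g * (q / g) := (Nat.mul_div_cancel' hgdvd).symm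
    rw [h1, pow_succ]
    exact mul_dvd_mul hpvg hp1
  have := (Nat.Prime.pow_dvd_iff_le_factorization hp hq0).mp this
  omega

def genZ {n : ℕ} (b : ZMod n) : Matrix (Fin 2) (Fin 2) (ZMod n) := !![0, 1; 1, b]

lemma cfGen_map (N : ℕ) (a : ℕ) :
    (cfGen a).map (Int.cast : ℤ → ZMod N) = genZ ((a : ZMod N)) := by
  ext i j
  fin_cases i <;> fin_cases j <;> simp [cfGen, genZ]

lemma castProd (N : ℕ) (l : List ℕ) :
    ((l.map cfGen).prod).map (Int.cast : ℤ → ZMod N)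
      = ((l.map (fun a => ((a : ℕ) : ZMod N))).map genZ).prod := by
  induction l with
  | nil => simp [Matrix.map_one]
  | cons a t ih =>
      simp only [List.map_cons, List.prod_cons]
      rw [show (Int.cast : ℤ → ZMod N) = ⇑(Int.castRingHom (ZMod N)) from rfl,
        Matrix.map_mul (f := Int.castRingHom (ZMod N))]
      rw [← ih]
      congr 1
      exact cfGen_map N a

lemma prod_nonneg' (l : List ℕ) : ∀ i j, 0 ≤ (l.map cfGen).prod i j := by
  induction l with
  | nil => intro i j; fin_cases i <;> fin_cases j <;> simp [Matrix.one_apply]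
  | cons a t ih =>
      intro i j
      simp only [List.map_cons, List.prod_cons, Matrix.mul_apply]
      apply Finset.sum_nonneg
      intro m _
      apply mul_nonneg _ (ih m j)
      fin_cases i <;> fin_cases m <;> simp [cfGen]

lemma genZ_sq (n : ℕ) : (genZ (0 : ZMod n)) * genZ 0 = 1 := by
  ext i j
  fin_cases i <;> fin_cases j <;> simp [genZ, Matrix.mul_apply, Fin.sum_univ_two, Matrix.one_apply]

lemma genZ_mul_entry (n : ℕ) (b c : ZMod n) : (genZ b * genZ c) 1 1 = b * c + 1 := by
  simp [genZ, Matrix.mul_apply, Fin.sum_univ_two, add_comm]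

lemma genZ_zero_pow_even (n s : ℕ) : (genZ (0 : ZMod n)) ^ (2 * s) = 1 := by
  rw [pow_mul, sq, genZ_sq, one_pow]

def patternList (q2 m t : ℕ) : List ℕ :=
  if Odd m then List.replicate (m - 1) 0 ++ [t]
  else List.replicate (m - 2) 0 ++ [1, t + q2 - 1]

lemma patternList_length (q2 m t : ℕ) (hm : 1 ≤ m) : (patternList q2 m t).length = m := by
  unfold patternList
  rcases Nat.even_or_odd m with he | ho
  · rw [if_neg (Nat.not_odd_iff_even.mpr he)]
    simp
    have : m ≠ 1 := by rintro rfl; simp [Nat.even_iff] at he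
    omega
  · rw [if_pos ho]
    simp
    omega

lemma patternList_prod (q2 m t : ℕ) (hq2 : 1 ≤ q2) (hm : 1 ≤ m) :
    (((patternList q2 m t).map (fun b : ℕ => (b : ZMod q2))).map genZ).prod 1 1
      = (t : ZMod q2) := by
  unfold patternList
  rcases Nat.even_or_odd m with he | ho
  · rw [if_neg (Nat.not_odd_iff_even.mpr he)]
    obtain ⟨s, hs⟩ : ∃ s, m - 2 = 2 * s := by
      obtain ⟨j, hj⟩ := he; exact ⟨j - 1, by omega⟩
    simp only [List.map_append, List.prod_append, List.map_replicate, List.prod_replicate,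
      Nat.cast_zero, hs, genZ_zero_pow_even, one_mul, List.map_cons, List.map_nil,
      List.prod_cons, List.prod_nil, mul_one]
    rw [genZ_mul_entry]
    have : ((1 : ℕ) : ZMod q2) * ((t + q2 - 1 : ℕ) : ZMod q2) + 1
        = (((t + q2 - 1) + 1 : ℕ) : ZMod q2) := by push_cast; ring
    rw [this, show t + q2 - 1 + 1 = t + q2 by omega]
    push_cast [ZMod.natCast_self]
    ring
  · rw [if_pos ho]
    obtain ⟨s, hs⟩ : ∃ s, m - 1 = 2 * s := by
      obtain ⟨j, hj⟩ := ho; exact ⟨j, by omega⟩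
    simp only [List.map_append, List.prod_append, List.map_replicate, List.prod_replicate,
      Nat.cast_zero, hs, genZ_zero_pow_even, one_mul, List.map_cons, List.map_nil,
      List.prod_cons, List.prod_nil, mul_one]
    simp [genZ]

lemma zip_map_left {α β γ : Type*} (f : α → β → α) (g : α → γ)
    (hfg : ∀ a b, g (f a b) = g a) :
    ∀ (l₁ : List α) (l₂ : List β), l₂.length = l₁.length →
      (List.zipWith f l₁ l₂).map g = l₁.map g := by
  intro l₁
  induction l₁ with
  | nil => intro l₂ _; simp
  | cons a t ih =>
      intro l₂ hl
      cases l₂ with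
      | nil => simp at hl
      | cons b s =>
          simp only [List.zipWith_cons_cons, List.map_cons, hfg]
          rw [ih s (by simpa using hl)]

lemma zip_map_right {α β γ : Type*} (f : α → β → α) (g : α → γ) (g' : β → γ)
    (hfg : ∀ a b, g (f a b) = g' b) :
    ∀ (l₁ : List α) (l₂ : List β), l₂.length = l₁.length →
      (List.zipWith f l₁ l₂).map g = l₂.map g' := by
  intro l₁
  induction l₁ with
  | nil => intro l₂ hl; simp at hl ⊢; simp [hl]
  | cons a t ih =>
      intro l₂ hl
      cases l₂ with
      | nil => simp at hl
      | cons b s =>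
          simp only [List.zipWith_cons_cons, List.map_cons, hfg]
          rw [ih s (by simpa using hl)]

lemma zip_mem {α β : Type*} (f : α → β → α) (P : α → Prop)
    (l₁ : List α) (l₂ : List β) (hP : ∀ a ∈ l₁, ∀ b, P (f a b)) :
    ∀ x ∈ List.zipWith f l₁ l₂, P x := by
  induction l₁ generalizing l₂ with
  | nil => simp
  | cons a t ih =>
      cases l₂ with
      | nil => simp
      | cons b s =>
          intro x hx
          simp only [List.zipWith_cons_cons, List.mem_cons] at hx
          rcases hx with rfl | hx
          · exact hP a (by simp) b
          · exact ih s (fun a' ha' b' => hP a' (by simp [ha']) b') x hx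

end Aux

/-- For `A = {a ≥ 1 : a ≡ r̄ (mod k)}`: if `D_A` surjects onto `ℤ/kⁿℤ` for every
`n ≥ 1`, then `A` has no local obstructions. -/
theorem no_local_obstructions_of_surjective_prime_power (k r : ℕ)
    (hk : 2 ≤ k) (hr1 : 1 ≤ r) (hrk : r ≤ k)
    (h : ∀ n : ℕ, 1 ≤ n → ∀ x : ZMod (k ^ n),
      ∃ d ∈ Denoms {a : ℕ | 1 ≤ a ∧ a ≡ r [MOD k]}, (d : ZMod (k ^ n)) = x) :
    ∀ q : ℕ, 2 ≤ q → ∀ x : ZMod q,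
      ∃ d ∈ Denoms {a : ℕ | 1 ≤ a ∧ a ≡ r [MOD k]}, (d : ZMod q) = x := by
  intro q hq x
  haveI : NeZero q := ⟨by omega⟩
  set A : Set ℕ := {a : ℕ | 1 ≤ a ∧ a ≡ r [MOD k]} with hA
  set K := k ^ q with hKdef
  have hK0 : 0 < K := Nat.pow_pos (by omega)
  have hkK : k ∣ K := dvd_pow_self k (by omega : q ≠ 0)
  set g := Nat.gcd q K with hgdef
  set q2 := q / g with hq2def
  have hgdvd : g ∣ q := Nat.gcd_dvd_left _ _
  have hgK : g ∣ K := Nat.gcd_dvd_right _ _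
  have hg0 : 0 < g := Nat.gcd_pos_of_pos_left _ (by omega)
  have hq2pos : 1 ≤ q2 := Nat.le_div_iff_mul_le hg0 |>.mpr (by simpa using Nat.le_of_dvd (by omega) hgdvd)
  have cop : Nat.Coprime q2 k := cop_aux k q hq
  have copK : Nat.Coprime K q2 := ((cop.pow_right q).symm : Nat.Coprime K q2)
  have hqdvd : q ∣ K * q2 := by
    have h1 : q = g * q2 := (Nat.mul_div_cancel' hgdvd).symm
    calc q = g * q2 := h1
    _ ∣ K * q2 := mul_dvd_mul_right hgK q2
  -- get witness from hypothesis
  obtain ⟨d0, hd0D, hd0cast⟩ := h q (by omega) ((x.val : ZMod (k ^ q)))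
  obtain ⟨M, ⟨l, hlne, hlA, hMeq⟩, hM11⟩ := hd0D
  set m := l.length with hmdef
  have hm1 : 1 ≤ m := by
    cases l with
    | nil => exact absurd rfl hlne
    | cons a t => simp [hmdef]
  set t := x.val with htdef
  set bl := patternList q2 m t with hbldef
  have hbllen : bl.length = m := patternList_length q2 m t hm1
  -- the digit function
  set dig : ℕ → ℕ → ℕ := fun a b => (Nat.chineseRemainder copK a b).val + K * q2 with hdigdef
  have hdigK : ∀ a b, dig a b ≡ a [MOD K] := by
    intro a b
    have h1 : dig a b ≡ (Nat.chineseRemainder copK a b).val [MOD K] := by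
      show (_ + K * q2) % K = _ % K
      exact Nat.add_mul_mod_self_left _ K q2
    exact h1.trans (Nat.chineseRemainder copK a b).2.1
  have hdigq2 : ∀ a b, dig a b ≡ b [MOD q2] := by
    intro a b
    have h1 : dig a b ≡ (Nat.chineseRemainder copK a b).val [MOD q2] := by
      show (_ + K * q2) % q2 = _ % q2
      rw [mul_comm]
      exact Nat.add_mul_mod_self_left _ q2 K
    exact h1.trans (Nat.chineseRemainder copK a b).2.2
  have hdigpos : ∀ a b, 1 ≤ dig a b := by
    intro a b
    have : 1 ≤ K * q2 := Nat.one_le_iff_ne_zero.mpr (by positivity)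
    simp only [hdigdef]
    omega
  -- the new digit list
  set l' := List.zipWith dig l bl with hl'def
  have hl'len : l'.length = m := by
    simp [hl'def, List.length_zipWith, hbllen]
    exact hmdef.le
  have hl'ne : l' ≠ [] := by
    intro hc
    rw [hc] at hl'len
    simp at hl'len
    omega
  have hl'A : ∀ a ∈ l', a ∈ A := by
    apply zip_mem dig (· ∈ A) l bl
    intro a ha b
    refine ⟨hdigpos a b, ?_⟩
    have h1 : dig a b ≡ a [MOD k] := (hdigK a b).of_dvd hkK
    exact h1.trans (hlA a ha).2
  set D := (l'.map cfGen).prod with hDdef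
  have hDnn : 0 ≤ D 1 1 := prod_nonneg' l' 1 1
  set d := (D 1 1).toNat with hddef
  have hD11 : D 1 1 = (d : ℤ) := (Int.toNat_of_nonneg hDnn).symm
  refine ⟨d, ⟨D, ⟨l', hl'ne, hl'A, hDdef⟩, hD11⟩, ?_⟩
  -- congruence mod K
  have hcongK : (d : ZMod K) = (d0 : ZMod K) := by
    have h1 : D.map (Int.cast : ℤ → ZMod K) = M.map (Int.cast : ℤ → ZMod K) := by
      rw [hDdef, hMeq, castProd, castProd]
      congr 1
      congr 1
      exact zip_map_left dig (fun a : ℕ => (a : ZMod K))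
        (fun a b => (ZMod.natCast_eq_natCast_iff _ _ _).mpr (hdigK a b)) l bl
        (by rw [hbllen])
    have h2 := congrFun (congrFun h1 1) 1
    simp only [Matrix.map_apply] at h2
    rw [hD11, hM11] at h2
    simpa using h2
  have hmodK : d ≡ x.val [MOD K] := by
    rw [hKdef] at hcongK
    have := hcongK.trans hd0cast
    exact (ZMod.natCast_eq_natCast_iff _ _ _).mp this
  -- congruence mod q2
  have hcongq2 : (d : ZMod q2) = (x.val : ZMod q2) := by
    have h1 : D.map (Int.cast : ℤ → ZMod q2)
        = ((bl.map (fun b : ℕ => (b : ZMod q2))).map genZ).prod := by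
      rw [hDdef, castProd]
      congr 1
      congr 1
      exact zip_map_right dig (fun a : ℕ => (a : ZMod q2)) (fun b : ℕ => (b : ZMod q2))
        (fun a b => (ZMod.natCast_eq_natCast_iff _ _ _).mpr (hdigq2 a b)) l bl
        (by rw [hbllen])
    have h2 := congrFun (congrFun h1 1) 1
    simp only [Matrix.map_apply] at h2
    rw [hD11] at h2
    rw [hbldef] at h2
    rw [patternList_prod q2 m t hq2pos hm1] at h2
    simpa [htdef] using h2
  have hmodq2 : d ≡ x.val [MOD q2] := (ZMod.natCast_eq_natCast_iff _ _ _).mp hcongq2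
  have hmodKq2 : d ≡ x.val [MOD K * q2] :=
    (Nat.modEq_and_modEq_iff_modEq_mul copK).mp ⟨hmodK, hmodq2⟩
  have hmodq : d ≡ x.val [MOD q] := hmodKq2.of_dvd hqdvd
  have : (d : ZMod q) = (x.val : ZMod q) := (ZMod.natCast_eq_natCast_iff _ _ _).mpr hmodq
  rw [this]
  exact ZMod.natCast_rightInverse x
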